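/- Let A be an H-simple algebra with a generalized H-action over an arbitrary field F (H a unital associative F-algebra). Then the sequence of H-codimensions is non-decreasing: c_n^H(A) ≤ c_{n+1}^H(A) for all n ∈ ℕ. -/

import Mathlib

open Filter Finset Submodule

noncomputable section

namespace PIExp

/-- The multiset of leaves (occurrences of generators) of a non-associative word. -/
def mleaves {α : Type} : FreeMagma α → Multiset α
  | .of a => {a}
  | .mul x y => mleaves x + mleaves y

variable (F : Type) [Field F] (S : Type)

/-- The absolutely free non-associative algebra on `X = {x_1, x_2, …}`
with symbols from `S` (the generator `(i, s)` plays the role of `x_i^s`). -/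
abbrev FreeNA : Type := FreeNonUnitalNonAssocAlgebra F (ℕ × S)

/-- A non-associative word in the generators, viewed inside the free algebra. -/
def embedMonomial : FreeMagma (ℕ × S) →ₙ* FreeNA F S :=
  FreeMagma.lift (FreeNonUnitalNonAssocAlgebra.of F)

/-- `Wn F S n` is the space of multilinear elements of degree `n` in `x_0, …, x_{n-1}`:
the span of all words `x_{σ(0)}^{s_0} ⋯ x_{σ(n-1)}^{s_{n-1}}` (all bracket arrangements). -/
def Wn (n : ℕ) : Submodule F (FreeNA F S) :=
  Submodule.span F
    {f | ∃ w : FreeMagma (ℕ × S), (mleaves w).map Prod.fst = Multiset.range n ∧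
      f = embedMonomial F S w}

/-- The substitution `x_i ↦ x_{g i}` (with the symbols untouched),
as an algebra endomorphism of the free algebra. -/
def relabelHom (g : ℕ → ℕ) : FreeNA F S →ₙₐ[F] FreeNA F S :=
  FreeNonUnitalNonAssocAlgebra.lift F
    (fun p : ℕ × S => FreeNonUnitalNonAssocAlgebra.of F (g p.1, p.2))

/-- `relabelHom` as a linear endomorphism. -/
def relabelL (g : ℕ → ℕ) : FreeNA F S →ₗ[F] FreeNA F S where
  toFun := relabelHom F S g
  map_add' := map_add _
  map_smul' := map_smul _

variable {A : Type} [NonUnitalNonAssocSemiring A] [Module F A]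
  [SMulCommClass F A A] [IsScalarTower F A A]

variable (A) in
/-- The ideal of polynomial `H`-identities of an algebra `A` with a generalized `H`-action:
all elements of the free algebra vanishing under every substitution `x_i^h ↦ h • ψ i`. -/
def IdH (H : Type) [Semiring H] [Module H A] : Submodule F (FreeNA F H) :=
  ⨅ ψ : ℕ → A,
    LinearMap.ker ((FreeNonUnitalNonAssocAlgebra.lift F (fun p : ℕ × H => p.2 • ψ p.1) :
      FreeNA F H →ₙₐ[F] A) : FreeNA F H →ₗ[F] A)

variable (A) in
/-- The ideal of graded polynomial identities of a `T`-graded algebra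
`A = ⊕_t comp t`: elements vanishing under all graded substitutions `x_i^{(t)} ↦ ψ (i,t) ∈ comp t`. -/
def IdGr (T : Type) (comp : T → Submodule F A) : Submodule F (FreeNA F T) :=
  ⨅ ψ : {ψ : ℕ × T → A // ∀ p, ψ p ∈ comp p.2},
    LinearMap.ker ((FreeNonUnitalNonAssocAlgebra.lift F (fun p : ℕ × T => ψ.1 p) :
      FreeNA F T →ₙₐ[F] A) : FreeNA F T →ₗ[F] A)

variable (A) in
/-- The ideal of ordinary polynomial identities of `A` (the symbols are trivial). -/
def IdOrd : Submodule F (FreeNA F Unit) :=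
  ⨅ ψ : ℕ → A,
    LinearMap.ker ((FreeNonUnitalNonAssocAlgebra.lift F (fun p : ℕ × Unit => ψ p.1) :
      FreeNA F Unit →ₙₐ[F] A) : FreeNA F Unit →ₗ[F] A)

/-- The `n`-th codimension attached to an ideal of identities `I`:
`dim (W_n / (W_n ∩ I))`, computed as the image of `W_n` in the quotient by `I`. -/
def codim (I : Submodule F (FreeNA F S)) (n : ℕ) : ℕ :=
  Module.finrank F ((Wn F S n).map I.mkQ)

/-- The `n`-th codimension as a cardinal (for possibly infinite-dimensional situations). -/
def codimRank (I : Submodule F (FreeNA F S)) (n : ℕ) : Cardinal :=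
  Module.rank F ((Wn F S n).map I.mkQ)

end PIExp
namespace PIExp

/-- The parts of a partition `p ⊢ n`, listed in non-increasing order:
`partFn p 0 = λ_1`, `partFn p 1 = λ_2`, … (`0` beyond the number of parts). -/
def partFn {n : ℕ} (p : Nat.Partition n) : ℕ → ℕ :=
  fun i => ((p.parts.sort (· ≤ ·)).reverse).getD i 0

/-- The cell (row, column) of the `k`-th box (0-indexed) in the canonical
row-by-row filling of the Young diagram with row lengths `lam`. -/
def cellOf (lam : ℕ → ℕ) : ℕ → ℕ × ℕ
  | 0 => (0, 0)
  | k + 1 =>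
      let c := cellOf lam k
      if c.2 + 1 < lam c.1 then (c.1, c.2 + 1) else (c.1 + 1, 0)

/-- The canonical Young tableau of shape `p`: the cell of each of the numbers `0, …, n-1`. -/
def canonT {n : ℕ} (p : Nat.Partition n) : Fin n → ℕ × ℕ :=
  fun m => cellOf (partFn p) (m : ℕ)

/-- A permutation of `Fin n` viewed as a map `ℕ → ℕ`. -/
def permNat {n : ℕ} (σ : Equiv.Perm (Fin n)) : ℕ → ℕ :=
  fun i => if h : i < n then (σ ⟨i, h⟩ : ℕ) else i

/-- The row stabilizer `R_{T}` of a tableau `T` (given by the cell of each number). -/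
def rowStab {n : ℕ} (Tb : Fin n → ℕ × ℕ) : Finset (Equiv.Perm (Fin n)) :=
  Finset.univ.filter fun π => ∀ m, (Tb (π m)).1 = (Tb m).1

/-- The column stabilizer `C_{T}` of a tableau `T`. -/
def colStab {n : ℕ} (Tb : Fin n → ℕ × ℕ) : Finset (Equiv.Perm (Fin n)) :=
  Finset.univ.filter fun π => ∀ m, (Tb (π m)).2 = (Tb m).2

variable (F : Type) [Field F] (S : Type)

/-- The Young symmetrizer `e_T = a_T b_T = Σ_{π ∈ R_T} Σ_{σ ∈ C_T} (sign σ) πσ`, acting on the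
free algebra by permutation of the variables. -/
def youngE {n : ℕ} (Tb : Fin n → ℕ × ℕ) : FreeNA F S →ₗ[F] FreeNA F S :=
  ∑ π ∈ rowStab Tb, ∑ σ ∈ colStab Tb,
    ((Equiv.Perm.sign σ : ℤ) : F) • relabelL F S (permNat (π * σ))

/-- The Young symmetrizer `e*_T = b_T a_T = Σ_{σ ∈ C_T} Σ_{π ∈ R_T} (sign σ) σπ`. -/
def youngEStar {n : ℕ} (Tb : Fin n → ℕ × ℕ) : FreeNA F S →ₗ[F] FreeNA F S :=
  ∑ σ ∈ colStab Tb, ∑ π ∈ rowStab Tb,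
    ((Equiv.Perm.sign σ : ℤ) : F) • relabelL F S (permNat (σ * π))

/-- The multiplicity `m(A, H, λ)` of the irreducible `S_n`-character `χ(λ)` in the `n`-th
cocharacter attached to the ideal of identities `I`; it equals
`dim e_{T_λ}·(W_n/(W_n ∩ I))`, computed here via the canonical tableau of shape `λ`. -/
def mult (I : Submodule F (FreeNA F S)) {n : ℕ} (p : Nat.Partition n) : ℕ :=
  Module.finrank F (((Wn F S n).map (youngE F S (canonT p))).map I.mkQ)

/-- The `n`-th colength `ℓ_n = Σ_{λ ⊢ n} m(A, H, λ)` attached to an ideal of identities `I`. -/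
def colength (I : Submodule F (FreeNA F S)) (n : ℕ) : ℕ :=
  ∑ p : Nat.Partition n, mult F S I p

/-- The function `Φ(x_1, …, x_s) = 1 / (x_1^{x_1} ⋯ x_s^{x_s})` (with `0^0 = 1`). -/
def Phi (s : ℕ) (x : Fin s → ℝ) : ℝ :=
  (∏ i, Real.rpow (x i) (x i))⁻¹

/-- `max { Φ(λ_1/n, …, λ_s/n) : λ ⊢ n, m(A,H,λ) ≠ 0 }`. -/
def maxPhi (s : ℕ) (I : Submodule F (FreeNA F S)) (n : ℕ) : ℝ :=
  sSup {r : ℝ | ∃ p : Nat.Partition n, mult F S I p ≠ 0 ∧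
    r = Phi s (fun i => (partFn p (i : ℕ) : ℝ) / (n : ℝ))}

/-- `d(A) = limsup_n max { Φ(λ_1/n, …, λ_s/n) : λ ⊢ n, m(A,H,λ) ≠ 0 }`. -/
def dVal (s : ℕ) (I : Submodule F (FreeNA F S)) : ℝ :=
  Filter.limsup (fun n : ℕ => maxPhi F S s I n) Filter.atTop

end PIExp
namespace PIExp

/-- `A` is an algebra with a generalized `H`-action: for every `h ∈ H` there exist
`h'_i, h''_i, h'''_i, h''''_i ∈ H` with
`h(ab) = Σ_i ((h'_i a)(h''_i b) + (h'''_i b)(h''''_i a))` for all `a, b ∈ A`. -/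
def IsGenAction (H A : Type) [Semiring H] [NonUnitalNonAssocSemiring A] [Module H A] : Prop :=
  ∀ h : H, ∃ (k : ℕ) (h₁ h₂ h₃ h₄ : Fin k → H), ∀ a b : A,
    h • (a * b) = ∑ i : Fin k, ((h₁ i • a) * (h₂ i • b) + (h₃ i • b) * (h₄ i • a))

/-- `A` is `H`-simple: `A² ≠ 0` and `A` has no `H`-invariant two-sided ideals
other than `0` and `A`. -/
def IsHSimple (F H A : Type) [Field F] [Semiring H] [NonUnitalNonAssocSemiring A]
    [Module F A] [Module H A] : Prop :=
  (∃ a b : A, a * b ≠ 0) ∧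
    ∀ I : Submodule F A,
      (∀ a : A, ∀ x ∈ I, a * x ∈ I) → (∀ a : A, ∀ x ∈ I, x * a ∈ I) →
      (∀ h : H, ∀ x ∈ I, h • x ∈ I) → I = ⊥ ∨ I = ⊤

/-- `comp : T → Submodule F A` is a grading of `A` by the set `T`:
`A = ⊕_{t ∈ T} A^{(t)}` and for all `s, t` there is `r` with `A^{(s)} A^{(t)} ⊆ A^{(r)}`. -/
def IsGrading (F T A : Type) [Field F] [NonUnitalNonAssocSemiring A] [Module F A]
    (comp : T → Submodule F A) : Prop :=
  iSupIndep comp ∧ (⨆ t, comp t) = ⊤ ∧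
    ∀ s t : T, ∃ r : T, ∀ a ∈ comp s, ∀ b ∈ comp t, a * b ∈ comp r

/-- A graded algebra is graded-simple: `A² ≠ 0` and the only graded two-sided ideals
are `0` and `A`. -/
def IsGradedSimple (F T A : Type) [Field F] [NonUnitalNonAssocSemiring A] [Module F A]
    (comp : T → Submodule F A) : Prop :=
  (∃ a b : A, a * b ≠ 0) ∧
    ∀ I : Submodule F A,
      (∀ a : A, ∀ x ∈ I, a * x ∈ I) → (∀ a : A, ∀ x ∈ I, x * a ∈ I) →
      (I = ⨆ t, I ⊓ comp t) → I = ⊥ ∨ I = ⊤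

end PIExp
namespace PIExp

section Aux

open FreeNonUnitalNonAssocAlgebra

variable (F : Type) [Field F] {H A : Type} [Ring H]
  [NonUnitalNonAssocRing A] [Module F A] [SMulCommClass F A A] [IsScalarTower F A A]
  [Module H A] [SMulCommClass F H A]

/-- Evaluation at a substitution `ψ`. -/
def ev (ψ : ℕ → A) : FreeNA F H →ₙₐ[F] A :=
  FreeNonUnitalNonAssocAlgebra.lift F (fun p : ℕ × H => p.2 • ψ p.1)

lemma mem_IdH_iff {f : FreeNA F H} : f ∈ IdH F A H ↔ ∀ ψ : ℕ → A, ev F ψ f = 0 := by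
  simp [IdH, ev, Submodule.mem_iInf, LinearMap.mem_ker]

variable {F}

section choices

variable (hact : IsGenAction H A) (h : H)

/-- The number of summands for `h`. -/
def gk : ℕ := (hact h).choose

def g1 : Fin (gk hact h) → H := (hact h).choose_spec.choose

def g2 : Fin (gk hact h) → H := (hact h).choose_spec.choose_spec.choose

def g3 : Fin (gk hact h) → H := (hact h).choose_spec.choose_spec.choose_spec.choose

def g4 : Fin (gk hact h) → H :=
  (hact h).choose_spec.choose_spec.choose_spec.choose_spec.choose

lemma g_spec (a b : A) :
    h • (a * b) = ∑ i : Fin (gk hact h),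
      ((g1 hact h i • a) * (g2 hact h i • b) + (g3 hact h i • b) * (g4 hact h i • a)) :=
  (hact h).choose_spec.choose_spec.choose_spec.choose_spec.choose_spec a b

end choices

variable (F)

/-- The substitution on generators: `x_m^h ↦ Σ_i (x_m^{h'_i} x_{m+1}^{h''_i} + x_{m+1}^{h'''_i} x_m^{h''''_i})`. -/
def Lsub (hact : IsGenAction H A) (m : ℕ) : ℕ × H → FreeNA F H := fun p =>
  if p.1 = m then
    ∑ i : Fin (gk hact p.2),
      (of F (m, g1 hact p.2 i) * of F (m + 1, g2 hact p.2 i)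
        + of F (m + 1, g3 hact p.2 i) * of F (m, g4 hact p.2 i))
  else of F p

def Lhom (hact : IsGenAction H A) (m : ℕ) : FreeNA F H →ₙₐ[F] FreeNA F H :=
  FreeNonUnitalNonAssocAlgebra.lift F (Lsub F hact m)

def LLin (hact : IsGenAction H A) (m : ℕ) : FreeNA F H →ₗ[F] FreeNA F H where
  toFun := Lhom F hact m
  map_add' := map_add _
  map_smul' := map_smul _

lemma ev_comp_Lhom (hact : IsGenAction H A) (m : ℕ) (φ : ℕ → A) :
    (ev F φ).comp (Lhom F hact m) = ev F (Function.update φ m (φ m * φ (m + 1))) := by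
  apply FreeNonUnitalNonAssocAlgebra.hom_ext
  rintro ⟨i, h⟩
  show ev F φ (Lhom F hact m (of F (i, h))) = _
  rw [Lhom, lift_of_apply, Lsub]
  by_cases hi : i = m
  · subst hi
    rw [if_pos rfl, map_sum]
    simp only [ev, map_add, map_mul, lift_of_apply]
    rw [Function.update_self, ← g_spec hact h (φ i) (φ (i + 1))]
  · rw [if_neg hi]
    simp only [ev, lift_of_apply]
    rw [Function.update_of_ne hi]

lemma ev_Lhom_apply (hact : IsGenAction H A) (m : ℕ) (φ : ℕ → A) (f : FreeNA F H) :
    ev F φ (Lhom F hact m f) = ev F (Function.update φ m (φ m * φ (m + 1))) f := by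
  rw [← ev_comp_Lhom F hact m φ]; rfl

lemma Lhom_mem_IdH (hact : IsGenAction H A) (m : ℕ) {f : FreeNA F H}
    (hf : f ∈ IdH F A H) : Lhom F hact m f ∈ IdH F A H := by
  rw [mem_IdH_iff] at hf ⊢
  intro φ
  rw [ev_Lhom_apply]
  exact hf _

lemma embed_of (a : ℕ × H) :
    embedMonomial F H (FreeMagma.of a) = of F a := by
  simp [embedMonomial]

lemma mleaves_of {α : Type} (a : α) : mleaves (FreeMagma.of a) = {a} := rfl

lemma mleaves_mul {α : Type} (x y : FreeMagma α) :
    mleaves (x * y) = mleaves x + mleaves y := rfl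

lemma ev_embed_congr (ψ₁ ψ₂ : ℕ → A) (w : FreeMagma (ℕ × H))
    (hψ : ∀ i ∈ (mleaves w).map Prod.fst, ψ₁ i = ψ₂ i) :
    ev F ψ₁ (embedMonomial F H w) = ev F ψ₂ (embedMonomial F H w) := by
  induction w with
  | ih1 a =>
    rw [embed_of]
    simp only [ev, lift_of_apply]
    rw [hψ a.1 (by simp [mleaves_of])]
  | ih2 x y ihx ihy =>
    simp only [map_mul]
    have h1 : ∀ i ∈ (mleaves x).map Prod.fst, ψ₁ i = ψ₂ i := fun i hi =>
      hψ i (by rw [mleaves_mul, Multiset.map_add]; exact Multiset.mem_add.mpr (Or.inl hi))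
    have h2 : ∀ i ∈ (mleaves y).map Prod.fst, ψ₁ i = ψ₂ i := fun i hi =>
      hψ i (by rw [mleaves_mul, Multiset.map_add]; exact Multiset.mem_add.mpr (Or.inr hi))
    rw [ihx h1, ihy h2]

lemma ev_embed_update_add (m : ℕ) (w : FreeMagma (ℕ × H))
    (hw : Multiset.count m ((mleaves w).map Prod.fst) = 1) (ψ : ℕ → A) (u v : A) :
    ev F (Function.update ψ m (u + v)) (embedMonomial F H w)
      = ev F (Function.update ψ m u) (embedMonomial F H w)
        + ev F (Function.update ψ m v) (embedMonomial F H w) := by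
  induction w with
  | ih1 a =>
    have ha : a.1 = m := by
      rw [mleaves_of, Multiset.map_singleton, Multiset.count_singleton] at hw
      split_ifs at hw with h
      exact h.symm
    rw [embed_of]
    simp only [ev, lift_of_apply]
    rw [ha, Function.update_self, Function.update_self, Function.update_self, smul_add]
  | ih2 x y ihx ihy =>
    rw [mleaves_mul, Multiset.map_add, Multiset.count_add] at hw
    simp only [map_mul]
    rcases Nat.add_eq_one_iff.mp hw with ⟨hx0, hy1⟩ | ⟨hx1, hy0⟩
    · have hx : ∀ t : A, ev F (Function.update ψ m t) (embedMonomial F H x)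
          = ev F ψ (embedMonomial F H x) := by
        intro t
        apply ev_embed_congr
        intro i hi
        have : i ≠ m := fun hi' => by
          rw [hi'] at hi
          exact (Multiset.count_eq_zero.mp hx0) hi
        exact Function.update_of_ne this _ _
      simp only [hx]
      rw [ihy hy1, mul_add]
    · have hy : ∀ t : A, ev F (Function.update ψ m t) (embedMonomial F H y)
          = ev F ψ (embedMonomial F H y) := by
        intro t
        apply ev_embed_congr
        intro i hi
        have : i ≠ m := fun hi' => by
          rw [hi'] at hi
          exact (Multiset.count_eq_zero.mp hy0) hi
        exact Function.update_of_ne this _ _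
      simp only [hy]
      rw [ihx hx1, add_mul]

lemma ev_embed_update_smul (m : ℕ) (w : FreeMagma (ℕ × H))
    (hw : Multiset.count m ((mleaves w).map Prod.fst) = 1) (ψ : ℕ → A) (c : F) (u : A) :
    ev F (Function.update ψ m (c • u)) (embedMonomial F H w)
      = c • ev F (Function.update ψ m u) (embedMonomial F H w) := by
  induction w with
  | ih1 a =>
    have ha : a.1 = m := by
      rw [mleaves_of, Multiset.map_singleton, Multiset.count_singleton] at hw
      split_ifs at hw with h
      exact h.symm
    rw [embed_of]
    simp only [ev, lift_of_apply]
    rw [ha, Function.update_self, Function.update_self]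
    exact (smul_comm c a.2 u).symm
  | ih2 x y ihx ihy =>
    rw [mleaves_mul, Multiset.map_add, Multiset.count_add] at hw
    simp only [map_mul]
    rcases Nat.add_eq_one_iff.mp hw with ⟨hx0, hy1⟩ | ⟨hx1, hy0⟩
    · have hx : ∀ t : A, ev F (Function.update ψ m t) (embedMonomial F H x)
          = ev F ψ (embedMonomial F H x) := by
        intro t
        apply ev_embed_congr
        intro i hi
        have : i ≠ m := fun hi' => by
          rw [hi'] at hi
          exact (Multiset.count_eq_zero.mp hx0) hi
        exact Function.update_of_ne this _ _
      simp only [hx]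
      rw [ihy hy1, mul_smul_comm]
    · have hy : ∀ t : A, ev F (Function.update ψ m t) (embedMonomial F H y)
          = ev F ψ (embedMonomial F H y) := by
        intro t
        apply ev_embed_congr
        intro i hi
        have : i ≠ m := fun hi' => by
          rw [hi'] at hi
          exact (Multiset.count_eq_zero.mp hy0) hi
        exact Function.update_of_ne this _ _
      simp only [hy]
      rw [ihx hx1, smul_mul_assoc]


lemma wn_props {n : ℕ} (m : ℕ) (hn : n = m + 1) {f : FreeNA F H} (hf : f ∈ Wn F H n) :
    (∀ (ψ : ℕ → A) (u v : A), ev F (Function.update ψ m (u + v)) f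
        = ev F (Function.update ψ m u) f + ev F (Function.update ψ m v) f) ∧
    (∀ (ψ : ℕ → A) (c : F) (u : A), ev F (Function.update ψ m (c • u)) f
        = c • ev F (Function.update ψ m u) f) ∧
    (∀ ψ₁ ψ₂ : ℕ → A, (∀ i < n, ψ₁ i = ψ₂ i) → ev F ψ₁ f = ev F ψ₂ f) := by
  induction hf using Submodule.span_induction with
  | mem x hx =>
    obtain ⟨w, hw, rfl⟩ := hx
    have hcount : Multiset.count m ((mleaves w).map Prod.fst) = 1 := by
      rw [hw, hn]
      exact Multiset.count_eq_one_of_mem (Multiset.nodup_range _)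
        (by rw [Multiset.mem_range]; omega)
    refine ⟨fun ψ u v => ev_embed_update_add F m w hcount ψ u v,
      fun ψ c u => ev_embed_update_smul F m w hcount ψ c u,
      fun ψ₁ ψ₂ h => ev_embed_congr F ψ₁ ψ₂ w fun i hi => h i ?_⟩
    rw [hw] at hi
    exact Multiset.mem_range.mp hi
  | zero => simp
  | add x y hx hy ihx ihy =>
    refine ⟨fun ψ u v => ?_, fun ψ c u => ?_, fun ψ₁ ψ₂ h => ?_⟩
    · simp only [map_add, ihx.1 ψ u v, ihy.1 ψ u v]; abel
    · simp only [map_add, ihx.2.1 ψ c u, ihy.2.1 ψ c u, smul_add]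
    · simp only [map_add, ihx.2.2 ψ₁ ψ₂ h, ihy.2.2 ψ₁ ψ₂ h]
  | smul c x hx ih =>
    refine ⟨fun ψ u v => ?_, fun ψ c' u => ?_, fun ψ₁ ψ₂ h => ?_⟩
    · simp only [map_smul, ih.1 ψ u v, smul_add]
    · simp only [map_smul, ih.2.1 ψ c' u]
      rw [smul_comm]
    · simp only [map_smul, ih.2.2 ψ₁ ψ₂ h]

lemma prodSpan_top (hact : IsGenAction H A) (hsimple : IsHSimple F H A) :
    Submodule.span F {x : A | ∃ a b : A, x = a * b} = ⊤ := by
  obtain ⟨⟨a₀, b₀, hab⟩, hmin⟩ := hsimple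
  have h1 : ∀ a : A, ∀ x ∈ Submodule.span F {x : A | ∃ a b : A, x = a * b},
      a * x ∈ Submodule.span F {x : A | ∃ a b : A, x = a * b} := by
    intro a x hx
    induction hx using Submodule.span_induction with
    | mem y hy =>
      obtain ⟨a', b', rfl⟩ := hy
      exact Submodule.subset_span ⟨a, a' * b', rfl⟩
    | zero => rw [mul_zero]; exact zero_mem _
    | add y z hy hz ihy ihz => rw [mul_add]; exact add_mem ihy ihz
    | smul c y hy ih => rw [mul_smul_comm]; exact Submodule.smul_mem _ c ih
  have h2 : ∀ a : A, ∀ x ∈ Submodule.span F {x : A | ∃ a b : A, x = a * b},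
      x * a ∈ Submodule.span F {x : A | ∃ a b : A, x = a * b} := by
    intro a x hx
    induction hx using Submodule.span_induction with
    | mem y hy =>
      obtain ⟨a', b', rfl⟩ := hy
      exact Submodule.subset_span ⟨a' * b', a, rfl⟩
    | zero => rw [zero_mul]; exact zero_mem _
    | add y z hy hz ihy ihz => rw [add_mul]; exact add_mem ihy ihz
    | smul c y hy ih => rw [smul_mul_assoc]; exact Submodule.smul_mem _ c ih
  have h3 : ∀ h : H, ∀ x ∈ Submodule.span F {x : A | ∃ a b : A, x = a * b},
      h • x ∈ Submodule.span F {x : A | ∃ a b : A, x = a * b} := by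
    intro h x hx
    induction hx using Submodule.span_induction with
    | mem y hy =>
      obtain ⟨a, b, rfl⟩ := hy
      rw [g_spec hact h a b]
      exact Submodule.sum_mem _ fun i _ => add_mem
        (Submodule.subset_span ⟨_, _, rfl⟩) (Submodule.subset_span ⟨_, _, rfl⟩)
    | zero => rw [smul_zero]; exact zero_mem _
    | add y z hy hz ihy ihz => rw [smul_add]; exact add_mem ihy ihz
    | smul c y hy ih =>
      have hcy : h • c • y = c • h • y := (smul_comm c h y).symm
      rw [hcy]
      exact Submodule.smul_mem _ c ih
  rcases hmin _ h1 h2 h3 with hbot | htop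
  · exfalso
    have hm : a₀ * b₀ ∈ Submodule.span F {x : A | ∃ a b : A, x = a * b} :=
      Submodule.subset_span ⟨a₀, b₀, rfl⟩
    rw [hbot, Submodule.mem_bot] at hm
    exact hab hm
  · exact htop

lemma mem_IdH_of_Lhom_mem (hact : IsGenAction H A) (hsimple : IsHSimple F H A)
    (m : ℕ) {f : FreeNA F H} (hf : f ∈ Wn F H (m + 1))
    (hLf : Lhom F hact m f ∈ IdH F A H) : f ∈ IdH F A H := by
  rw [mem_IdH_iff] at hLf ⊢
  intro ψ
  obtain ⟨hadd, hsmul, hind⟩ := wn_props (A := A) F m rfl hf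
  set E : A →ₗ[F] A :=
    { toFun := fun u => ev F (Function.update ψ m u) f
      map_add' := fun u v => hadd ψ u v
      map_smul' := fun c u => hsmul ψ c u } with hE
  have hEprod : ∀ a b : A, E (a * b) = 0 := by
    intro a b
    have h1 := hLf (Function.update (Function.update ψ m a) (m + 1) b)
    rw [ev_Lhom_apply] at h1
    have hupd : Function.update (Function.update ψ m a) (m + 1) b m = a := by
      rw [Function.update_of_ne (by omega), Function.update_self]
    have hupd2 : Function.update (Function.update ψ m a) (m + 1) b (m + 1) = b :=
      Function.update_self _ _ _
    rw [hupd, hupd2] at h1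
    have := hind (Function.update (Function.update (Function.update ψ m a) (m + 1) b) m (a * b))
      (Function.update ψ m (a * b)) ?_
    · show ev F (Function.update ψ m (a * b)) f = 0
      rw [← this]
      exact h1
    · intro i hi
      by_cases him : i = m
      · subst him
        rw [Function.update_self, Function.update_self]
      · rw [Function.update_of_ne him, Function.update_of_ne (by omega),
          Function.update_of_ne him, Function.update_of_ne him]
  have hker : Submodule.span F {x : A | ∃ a b : A, x = a * b} ≤ LinearMap.ker E :=
    Submodule.span_le.mpr (by rintro x ⟨a, b, rfl⟩; exact LinearMap.mem_ker.mpr (hEprod a b))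
  rw [prodSpan_top F hact hsimple, top_le_iff] at hker
  have hE0 : E (ψ m) = 0 := by
    rw [← LinearMap.mem_ker, hker]
    exact Submodule.mem_top
  show ev F ψ f = 0
  rw [← Function.update_eq_self m ψ]
  exact hE0

private lemma mul_mem_span_aux {R B : Type} [Field R] [NonUnitalNonAssocSemiring B]
    [Module R B] [SMulCommClass R B B] [IsScalarTower R B B]
    {Sx Sy : Set B} {P : Submodule R B} (h : ∀ a ∈ Sx, ∀ b ∈ Sy, a * b ∈ P) {u v : B}
    (hu : u ∈ Submodule.span R Sx) (hv : v ∈ Submodule.span R Sy) : u * v ∈ P := by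
  induction hu using Submodule.span_induction with
  | mem a ha =>
    induction hv using Submodule.span_induction with
    | mem b hb => exact h a ha b hb
    | zero => rw [mul_zero]; exact zero_mem _
    | add b c hb hc ihb ihc => rw [mul_add]; exact add_mem ihb ihc
    | smul r b hb ih => rw [mul_smul_comm]; exact Submodule.smul_mem _ _ ih
  | zero => rw [zero_mul]; exact zero_mem _
  | add a c ha hc iha ihc => rw [add_mul]; exact add_mem iha ihc
  | smul r a ha ih => rw [smul_mul_assoc]; exact Submodule.smul_mem _ _ ih

lemma pair_add_ms (a b : ℕ) : ({a} : Multiset ℕ) + {b} = {a, b} := rfl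

lemma L_embed_mem (hact : IsGenAction H A) (m : ℕ) (w : FreeMagma (ℕ × H)) :
    Lhom F hact m (embedMonomial F H w) ∈ Submodule.span F
      {f : FreeNA F H | ∃ w' : FreeMagma (ℕ × H),
        (mleaves w').map Prod.fst
          = ((mleaves w).map Prod.fst).bind
              (fun i => if i = m then ({m, m + 1} : Multiset ℕ) else {i}) ∧
        f = embedMonomial F H w'} := by
  induction w with
  | ih1 a =>
    rw [embed_of, Lhom, lift_of_apply, Lsub]
    by_cases ha : a.1 = m
    · rw [if_pos ha]
      refine Submodule.sum_mem _ fun i _ => Submodule.add_mem _ ?_ ?_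
      · refine Submodule.subset_span
          ⟨FreeMagma.of (m, g1 hact a.2 i) * FreeMagma.of (m + 1, g2 hact a.2 i), ?_, ?_⟩
        · rw [mleaves_mul, mleaves_of, mleaves_of, mleaves_of, Multiset.map_add,
            Multiset.map_singleton, Multiset.map_singleton, Multiset.map_singleton,
            Multiset.singleton_bind, ha, if_pos rfl, pair_add_ms]
        · rw [map_mul, embed_of, embed_of]
      · refine Submodule.subset_span
          ⟨FreeMagma.of (m + 1, g3 hact a.2 i) * FreeMagma.of (m, g4 hact a.2 i), ?_, ?_⟩
        · rw [mleaves_mul, mleaves_of, mleaves_of, mleaves_of, Multiset.map_add,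
            Multiset.map_singleton, Multiset.map_singleton, Multiset.map_singleton,
            Multiset.singleton_bind, ha, if_pos rfl, pair_add_ms]
          exact Multiset.pair_comm _ _
        · rw [map_mul, embed_of, embed_of]
    · rw [if_neg ha]
      refine Submodule.subset_span ⟨FreeMagma.of a, ?_, (embed_of F a).symm⟩
      rw [mleaves_of, Multiset.map_singleton, Multiset.singleton_bind, if_neg ha]
  | ih2 x y ihx ihy =>
    rw [map_mul, map_mul]
    refine mul_mem_span_aux (fun f1 hf1 f2 hf2 => ?_) ihx ihy
    obtain ⟨w1, hw1, rfl⟩ := hf1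
    obtain ⟨w2, hw2, rfl⟩ := hf2
    rw [← map_mul]
    refine Submodule.subset_span ⟨w1 * w2, ?_, rfl⟩
    rw [mleaves_mul, mleaves_mul, Multiset.map_add, Multiset.map_add, Multiset.add_bind,
      hw1, hw2]

lemma repl_range (m : ℕ) :
    (Multiset.range (m + 1)).bind
        (fun i => if i = m then ({m, m + 1} : Multiset ℕ) else {i})
      = Multiset.range (m + 2) := by
  rw [Multiset.range_succ, Multiset.cons_bind, if_pos rfl]
  have hrest : (Multiset.range m).bind
      (fun i => if i = m then ({m, m + 1} : Multiset ℕ) else {i}) = Multiset.range m := by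
    calc (Multiset.range m).bind (fun i => if i = m then ({m, m + 1} : Multiset ℕ) else {i})
        = (Multiset.range m).bind (fun i => ({i} : Multiset ℕ)) :=
          Multiset.bind_congr (fun i hi => if_neg (by rw [Multiset.mem_range] at hi; omega))
      _ = (Multiset.range m).map id := Multiset.bind_singleton _ _
      _ = Multiset.range m := Multiset.map_id _
  rw [hrest, Multiset.range_succ, Multiset.range_succ, Multiset.insert_eq_cons,
    Multiset.cons_add, Multiset.singleton_add, Multiset.cons_swap]

lemma L_Wn_le (hact : IsGenAction H A) (m : ℕ) :
    (Wn F H (m + 1)).map (LLin F hact m) ≤ Wn F H (m + 2) := by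
  rw [Wn, Submodule.map_span_le]
  rintro f ⟨w, hw, rfl⟩
  have h := L_embed_mem F hact m w
  rw [hw, repl_range m] at h
  exact h

lemma mleaves_ne_zero {α : Type} (w : FreeMagma α) : mleaves w ≠ 0 := by
  induction w with
  | ih1 a => simp [mleaves_of]
  | ih2 x y ihx ihy =>
    rw [mleaves_mul]
    intro h
    have hc := congrArg Multiset.card h
    rw [Multiset.card_add, Multiset.card_zero] at hc
    exact ihx (Multiset.card_eq_zero.mp (by omega))

lemma Wn_zero : Wn F H 0 = ⊥ := by
  apply le_bot_iff.mp
  rw [Wn, Submodule.span_le]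
  rintro f ⟨w, hw, rfl⟩
  exfalso
  rw [Multiset.range_zero, Multiset.map_eq_zero] at hw
  exact mleaves_ne_zero w hw

end Aux

end PIExp

/-- **Lemma (H-codimensions of an H-simple algebra are non-decreasing).**
If `A` is an `H`-simple algebra with a generalized `H`-action over an arbitrary field `F`,
then `c_n^H(A) ≤ c_{n+1}^H(A)` for all `n`. -/
theorem H_codim_nondecreasing_of_H_simple
    (F H A : Type) [Field F] [Ring H] [Algebra F H]
    [NonUnitalNonAssocRing A] [Module F A] [SMulCommClass F A A] [IsScalarTower F A A]
    [Module H A] [IsScalarTower F H A] [SMulCommClass F H A]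
    (hact : PIExp.IsGenAction H A) (hsimple : PIExp.IsHSimple F H A) (n : ℕ) :
    PIExp.codimRank F H (PIExp.IdH F A H) n ≤
      PIExp.codimRank F H (PIExp.IdH F A H) (n + 1) := by
  classical
  rcases n with _ | m
  · rw [PIExp.codimRank, PIExp.Wn_zero, Submodule.map_bot, rank_bot]
    exact zero_le
  · set I := PIExp.IdH F A H with hI
    set Q := I.mkQ with hQ
    set W1 := PIExp.Wn F H (m + 1) with hW1
    let q1 : W1 →ₗ[F] (PIExp.FreeNA F H ⧸ I) := Q.comp W1.subtype
    let q2 : W1 →ₗ[F] (PIExp.FreeNA F H ⧸ I) :=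
      (Q.comp (PIExp.LLin F hact m)).comp W1.subtype
    have hker : LinearMap.ker q1 = LinearMap.ker q2 := by
      ext x
      simp only [q1, q2, LinearMap.mem_ker, LinearMap.comp_apply, Submodule.coe_subtype,
        hQ, Submodule.mkQ_apply, Submodule.Quotient.mk_eq_zero]
      constructor
      · intro hx
        exact PIExp.Lhom_mem_IdH F hact m hx
      · intro hx
        exact PIExp.mem_IdH_of_Lhom_mem F hact hsimple m x.2 hx
    have e1 : LinearMap.range q1 = W1.map Q := by
      rw [LinearMap.range_comp, Submodule.range_subtype]
    have e2 : LinearMap.range q2 = (W1.map (PIExp.LLin F hact m)).map Q := by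
      rw [LinearMap.range_comp, Submodule.range_subtype, Submodule.map_comp]
    have hle : LinearMap.range q2 ≤ (PIExp.Wn F H (m + 2)).map Q := by
      rw [e2]
      exact Submodule.map_mono (PIExp.L_Wn_le F hact m)
    show Module.rank F ((PIExp.Wn F H (m + 1)).map I.mkQ)
      ≤ Module.rank F ((PIExp.Wn F H (m + 1 + 1)).map I.mkQ)
    calc Module.rank F ((PIExp.Wn F H (m + 1)).map I.mkQ)
        = Module.rank F (LinearMap.range q1) := by rw [e1]
      _ = Module.rank F (W1 ⧸ LinearMap.ker q1) :=
          (LinearMap.quotKerEquivRange q1).rank_eq.symm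
      _ = Module.rank F (W1 ⧸ LinearMap.ker q2) := by rw [hker]
      _ = Module.rank F (LinearMap.range q2) := (LinearMap.quotKerEquivRange q2).rank_eq
      _ ≤ Module.rank F ((PIExp.Wn F H (m + 2)).map Q) := Submodule.rank_mono hle
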